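/- Let l be an odd prime. Suppose the only rational points on the hyperelliptic curve C_l : Y^2 = 20 X^l + 5 are the point at infinity and (1, 5) and (1, -5). Then there are no nonzero coprime integers x, y, z with x^5 + y^5 = z^l, xyz ≠ 0, and 5 not dividing z. -/

import Mathlib

theorem no_solutions_55l_five_not_dvd (l : ℕ) (hl : l.Prime) (hodd : Odd l)
    (hC : ∀ X Y : ℚ, Y ^ 2 = 20 * X ^ l + 5 → X = 1 ∧ (Y = 5 ∨ Y = -5)) :
    ¬ ∃ x y z : ℤ, IsCoprime x y ∧ x ^ 5 + y ^ 5 = z ^ l ∧ x * y * z ≠ 0 ∧ ¬ (5 ∣ z) := by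
  rintro ⟨x, y, z, hxy, heq, hne, h5z⟩
  have hx0 : x ≠ 0 := fun h => hne (by simp [h])
  have hy0 : y ≠ 0 := fun h => hne (by simp [h])
  have hz0 : z ≠ 0 := fun h => hne (by simp [h])
  set s : ℤ := x + y with hs
  set t : ℤ := x * y with ht
  set q : ℤ := s ^ 4 - 5 * s ^ 2 * t + 5 * t ^ 2 with hq
  have hfac : s * q = z ^ l := by rw [← heq]; ring
  have hs0 : s ≠ 0 := by
    intro h
    rw [h, zero_mul] at hfac
    exact hz0 (pow_eq_zero_iff hl.ne_zero |>.mp hfac.symm)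
  -- coprimality of s and t
  have hst : IsCoprime s t := by
    have h1 : IsCoprime s x := by
      have := hxy.symm.add_mul_left_left 1
      simpa [add_comm, mul_comm] using this
    have h2 : IsCoprime s y := by
      have := hxy.add_mul_left_left 1
      simpa [add_comm, mul_comm] using this
    exact h1.mul_right h2
  have h5prime : Prime (5 : ℤ) := by norm_num
  have h5s : ¬ (5 : ℤ) ∣ s := by
    intro h
    exact h5z (h5prime.dvd_of_dvd_pow (hfac ▸ h.mul_right q))
  have hs5 : IsCoprime s (5 : ℤ) :=
    ((h5prime.coprime_iff_not_dvd).mpr h5s).symm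
  have hsq : IsCoprime s q := by
    have h5t2 : IsCoprime s (5 * t ^ 2) := hs5.mul_right (hst.pow_right)
    have : q = 5 * t ^ 2 + s * (s ^ 3 - 5 * s * t) := by ring
    rw [this]
    exact (h5t2.add_mul_left_right _)
  obtain ⟨⟨a, ha⟩, ⟨b, hb⟩⟩ := Int.eq_pow_of_mul_eq_pow_odd hsq hodd hfac
  have ha0 : (a : ℚ) ≠ 0 := by
    simp only [ne_eq, Int.cast_eq_zero]
    rintro rfl
    exact hs0 (by simpa [hl.ne_zero] using ha)
  have hsQ : (s : ℚ) ≠ 0 := Int.cast_ne_zero.mpr hs0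
  -- apply the curve hypothesis
  have key := hC ((b : ℚ) / (a : ℚ) ^ 4) (10 * (t : ℚ) / (s : ℚ) ^ 2 - 5) ?_
  · rcases key.2 with hY | hY
    · -- 10 t / s^2 - 5 = 5  ⇒  t = s^2  ⇒ x^2+xy+y^2 = 0
      have : (10 : ℚ) * t = 10 * s ^ 2 := by
        field_simp at hY
        linarith [hY]
      have htI : t = s ^ 2 := by
        have h2 : (t : ℚ) = (s : ℚ) ^ 2 := by push_cast at this ⊢; linarith
        exact_mod_cast h2
      have hzero : x ^ 2 + x * y + y ^ 2 = 0 := by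
        have : x * y = (x + y) ^ 2 := htI
        nlinarith [this]
      have hx2 : (0 : ℤ) < x ^ 2 := by positivity
      nlinarith [sq_nonneg (2 * x + y), sq_nonneg y]
    · -- 10 t / s^2 - 5 = -5  ⇒  t = 0
      have htQ : (t : ℚ) = 0 := by field_simp at hY; linarith
      have : t = 0 := by exact_mod_cast htQ
      exact (mul_ne_zero hx0 hy0) this
  · -- verify the curve equation
    have hql : (q : ℚ) = (b : ℚ) ^ l := by exact_mod_cast congrArg (Int.cast : ℤ → ℚ) hb
    have hsl : (s : ℚ) = (a : ℚ) ^ l := by exact_mod_cast congrArg (Int.cast : ℤ → ℚ) ha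
    have hXl : ((b : ℚ) / (a : ℚ) ^ 4) ^ l = (q : ℚ) / (s : ℚ) ^ 4 := by
      rw [div_pow, ← pow_mul, mul_comm 4 l, pow_mul, ← hsl, ← hql]
    rw [hXl]
    have hint : ((10 * t - 5 * s ^ 2) ^ 2 : ℤ) = 20 * q + 5 * s ^ 4 := by rw [hq]; ring
    have hintQ : ((10 * (t : ℚ) - 5 * (s : ℚ) ^ 2) ^ 2) = 20 * (q : ℚ) + 5 * (s : ℚ) ^ 4 := by
      exact_mod_cast congrArg (Int.cast : ℤ → ℚ) hint
    field_simp
    linear_combination hintQ
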